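/- Let f ∈ L²(ℝ^d) ∩ L^∞(ℝ^d) with ‖f‖_∞ > 0, and let 0 ≤ δ < 1/(2‖f‖_∞). Then the power series t ↦ Ψ(tf) = ∑_{m≥0} (t^m/m!) B_f^{+m}Φ converges in the quadratic Fock space for 0 ≤ t < δ, is n-times differentiable in t term by term, and (d^n/dt^n)|_{t=0} Ψ(tf) = B_f^{+n}Φ. Consequently each B_f^{+n}Φ lies in the closed linear span of quadratic exponential vectors, i.e. the quadratic exponential vectors are total in the quadratic Fock space. -/

import Mathlib

open MeasureTheory
open scoped ENNReal

/-- Totality of quadratic exponential vectors. Abstractly: `v f m` models `B_f^{+m}Φ` in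
the quadratic Fock space `H`, satisfying the squared-norm growth bound
`‖v f m‖² ≤ (4m(m-1)‖f‖_∞² + 2m‖f‖₂²)‖v f (m-1)‖²`. Then for `0 < δ < 1/(2‖f‖_∞)`,
the series `Ψ(tf) = ∑ (tᵐ/m!) v f m` converges for `|t| < δ`, its `n`-th derivative at
`t = 0` equals `v f n`, and each `v f n` lies in the closed linear span of the quadratic
exponential vectors. -/
theorem stmt19 {d : ℕ} {H : Type*} [NormedAddCommGroup H] [InnerProductSpace ℂ H]
    [CompleteSpace H]
    (f : (Fin d → ℝ) → ℂ)
    (hf2 : MemLp f 2 volume) (hfI : MemLp f ⊤ volume)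
    (hfpos : 0 < (eLpNorm f ⊤ volume).toReal)
    (v : ℕ → H)
    (hnorm : ∀ m : ℕ, 1 ≤ m →
      ‖v m‖ ^ 2 ≤ (4 * m * ((m : ℝ) - 1) * (eLpNorm f ⊤ volume).toReal ^ 2 +
          2 * m * (eLpNorm f 2 volume).toReal ^ 2) * ‖v (m - 1)‖ ^ 2)
    (δ : ℝ) (hδ0 : 0 < δ) (hδ : δ < 1 / (2 * (eLpNorm f ⊤ volume).toReal)) :
    (∀ t : ℝ, |t| < δ →
      Summable (fun m : ℕ => ((t ^ m / (Nat.factorial m : ℝ) : ℝ) : ℂ) • v m)) ∧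
    (∀ n : ℕ, iteratedDerivWithin n
        (fun t : ℝ => ∑' m : ℕ, ((t ^ m / (Nat.factorial m : ℝ) : ℝ) : ℂ) • v m)
        (Set.Ioo (-δ) δ) 0 = v n) ∧
    (∀ n : ℕ, v n ∈ closure (Submodule.span ℂ
        {x : H | ∃ t : ℝ, |t| < δ ∧
          x = ∑' m : ℕ, ((t ^ m / (Nat.factorial m : ℝ) : ℝ) : ℂ) • v m} : Set H)) := by
  classical
  set M : ℝ := (eLpNorm f ⊤ volume).toReal with hMdef
  set N : ℝ := (eLpNorm f 2 volume).toReal with hNdef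
  have hM0 : 0 < M := hfpos
  have hN0 : 0 ≤ N := ENNReal.toReal_nonneg
  have h2Mδ : 2 * M * δ < 1 := by
    rw [lt_div_iff₀ (by positivity)] at hδ; nlinarith
  set F : ℝ → H := fun t : ℝ => ∑' m : ℕ, ((t ^ m / (Nat.factorial m : ℝ) : ℝ) : ℂ) • v m
    with hFdef
  -- Step bound
  have hstep : ∀ m : ℕ, ‖v (m+1)‖ ≤
      Real.sqrt (4*((m:ℝ)+1)*m*M^2 + 2*((m:ℝ)+1)*N^2) * ‖v m‖ := by
    intro m
    have h := hnorm (m+1) (Nat.le_add_left 1 m)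
    simp only [Nat.add_sub_cancel] at h
    push_cast at h
    have h2 : ‖v (m+1)‖^2 ≤ (4*((m:ℝ)+1)*m*M^2 + 2*((m:ℝ)+1)*N^2) * ‖v m‖^2 := by
      calc ‖v (m+1)‖^2 ≤ _ := h
        _ = (4*((m:ℝ)+1)*m*M^2 + 2*((m:ℝ)+1)*N^2) * ‖v m‖^2 := by ring
    have hK0 : (0:ℝ) ≤ 4*((m:ℝ)+1)*m*M^2 + 2*((m:ℝ)+1)*N^2 := by positivity
    calc ‖v (m+1)‖ = Real.sqrt (‖v (m+1)‖^2) := (Real.sqrt_sq (norm_nonneg _)).symm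
      _ ≤ Real.sqrt ((4*((m:ℝ)+1)*m*M^2 + 2*((m:ℝ)+1)*N^2) * ‖v m‖^2) :=
          Real.sqrt_le_sqrt h2
      _ = Real.sqrt (4*((m:ℝ)+1)*m*M^2 + 2*((m:ℝ)+1)*N^2) * ‖v m‖ := by
          rw [Real.sqrt_mul hK0, Real.sqrt_sq (norm_nonneg _)]
  -- Key summability
  have key : ∀ t : ℝ, |t| ≤ δ →
      Summable (fun m : ℕ => |t|^m / (m.factorial : ℝ) * ‖v m‖) := by
    have hsqrtK : ∀ m : ℕ, Real.sqrt (4*((m:ℝ)+1)*m*M^2 + 2*((m:ℝ)+1)*N^2) ≤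
        2*M*((m:ℝ)+1) + Real.sqrt 2 * Real.sqrt ((m:ℝ)+1) * N := by
      intro m
      have hs2 : (Real.sqrt 2)^2 = 2 := Real.sq_sqrt (by norm_num)
      have hsm : (Real.sqrt ((m:ℝ)+1))^2 = (m:ℝ)+1 := Real.sq_sqrt (by positivity)
      have h1 : 4*((m:ℝ)+1)*m*M^2 + 2*((m:ℝ)+1)*N^2 ≤
          (2*M*((m:ℝ)+1) + Real.sqrt 2 * Real.sqrt ((m:ℝ)+1) * N)^2 := by
        have hcross : 0 ≤ 2*(2*M*((m:ℝ)+1))*(Real.sqrt 2 * Real.sqrt ((m:ℝ)+1) * N) := by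
          positivity
        have hB2 : (Real.sqrt 2 * Real.sqrt ((m:ℝ)+1) * N)^2 = 2*((m:ℝ)+1)*N^2 := by
          rw [mul_pow, mul_pow, hs2, hsm]
        calc 4*((m:ℝ)+1)*m*M^2 + 2*((m:ℝ)+1)*N^2
            ≤ 4*M^2*((m:ℝ)+1)^2 + 2*((m:ℝ)+1)*N^2 := by
              nlinarith [mul_nonneg (mul_nonneg (by norm_num : (0:ℝ) ≤ 4) (sq_nonneg M))
                (show (0:ℝ) ≤ (m:ℝ)+1 by positivity)]
          _ = (2*M*((m:ℝ)+1))^2 + (Real.sqrt 2 * Real.sqrt ((m:ℝ)+1) * N)^2 := by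
              rw [hB2]; ring
          _ ≤ (2*M*((m:ℝ)+1) + Real.sqrt 2 * Real.sqrt ((m:ℝ)+1) * N)^2 := by
              nlinarith [hcross]
      calc Real.sqrt (4*((m:ℝ)+1)*m*M^2 + 2*((m:ℝ)+1)*N^2)
          ≤ Real.sqrt ((2*M*((m:ℝ)+1) + Real.sqrt 2 * Real.sqrt ((m:ℝ)+1) * N)^2) :=
            Real.sqrt_le_sqrt h1
        _ = _ := Real.sqrt_sq (by positivity)
    intro t ht
    set r : ℝ := (1 + 2*M*δ)/2 with hr
    have hr1 : r < 1 := by rw [hr]; linarith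
    have hε : 0 < r - 2*M*δ := by rw [hr]; nlinarith
    apply summable_of_ratio_norm_eventually_le hr1
    obtain ⟨m₀, hm₀⟩ := exists_nat_ge ((δ * (Real.sqrt 2 * N) / (r - 2*M*δ))^2)
    filter_upwards [Filter.eventually_ge_atTop m₀] with m hm
    have hsm1 : δ * (Real.sqrt 2 * N) ≤ (r - 2*M*δ) * Real.sqrt ((m:ℝ)+1) := by
      have h1 : Real.sqrt ((δ * (Real.sqrt 2 * N) / (r - 2*M*δ))^2) ≤ Real.sqrt ((m:ℝ)+1) := by
        apply Real.sqrt_le_sqrt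
        calc (δ * (Real.sqrt 2 * N) / (r - 2*M*δ))^2 ≤ (m₀:ℝ) := hm₀
          _ ≤ (m:ℝ) := by exact_mod_cast hm
          _ ≤ (m:ℝ)+1 := by linarith
      rw [Real.sqrt_sq_eq_abs] at h1
      have h2 : δ * (Real.sqrt 2 * N) / (r - 2*M*δ) ≤ Real.sqrt ((m:ℝ)+1) :=
        le_trans (le_abs_self _) h1
      rw [div_le_iff₀ hε] at h2
      linarith
    have hLs : δ * Real.sqrt (4*((m:ℝ)+1)*m*M^2 + 2*((m:ℝ)+1)*N^2) ≤ r * ((m:ℝ)+1) := by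
      have hsm : (Real.sqrt ((m:ℝ)+1)) * (Real.sqrt ((m:ℝ)+1)) = (m:ℝ)+1 :=
        Real.mul_self_sqrt (by positivity)
      calc δ * Real.sqrt (4*((m:ℝ)+1)*m*M^2 + 2*((m:ℝ)+1)*N^2)
          ≤ δ * (2*M*((m:ℝ)+1) + Real.sqrt 2 * Real.sqrt ((m:ℝ)+1) * N) :=
            mul_le_mul_of_nonneg_left (hsqrtK m) hδ0.le
        _ = 2*M*δ*((m:ℝ)+1) + (δ * (Real.sqrt 2 * N)) * Real.sqrt ((m:ℝ)+1) := by ring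
        _ ≤ 2*M*δ*((m:ℝ)+1) + ((r - 2*M*δ) * Real.sqrt ((m:ℝ)+1)) * Real.sqrt ((m:ℝ)+1) := by
            gcongr
        _ = r * ((m:ℝ)+1) := by linear_combination (r - 2*M*δ) * hsm
    have hA0 : (0:ℝ) ≤ |t|^m / (m.factorial:ℝ) * ‖v m‖ := by positivity
    rw [Real.norm_of_nonneg (by positivity), Real.norm_of_nonneg hA0]
    have hfac : (((m+1).factorial : ℕ) : ℝ) = ((m:ℝ)+1) * (m.factorial:ℝ) := by
      rw [Nat.factorial_succ]; push_cast; ring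
    calc |t|^(m+1) / (((m+1).factorial:ℕ):ℝ) * ‖v (m+1)‖
        ≤ |t|^(m+1) / (((m+1).factorial:ℕ):ℝ) *
          (Real.sqrt (4*((m:ℝ)+1)*m*M^2 + 2*((m:ℝ)+1)*N^2) * ‖v m‖) := by
          gcongr
          exact hstep m
      _ = (|t| * Real.sqrt (4*((m:ℝ)+1)*m*M^2 + 2*((m:ℝ)+1)*N^2) / ((m:ℝ)+1)) *
          (|t|^m / (m.factorial:ℝ) * ‖v m‖) := by
          rw [hfac, pow_succ]; field_simp
      _ ≤ (δ * Real.sqrt (4*((m:ℝ)+1)*m*M^2 + 2*((m:ℝ)+1)*N^2) / ((m:ℝ)+1)) *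
          (|t|^m / (m.factorial:ℝ) * ‖v m‖) := by
          gcongr
      _ ≤ r * (|t|^m / (m.factorial:ℝ) * ‖v m‖) := by
          apply mul_le_mul_of_nonneg_right _ hA0
          rw [div_le_iff₀ (by positivity : (0:ℝ) < (m:ℝ)+1)]
          exact hLs
  -- norms of terms
  have norm_term : ∀ (t : ℝ) (m : ℕ),
      ‖((t ^ m / (Nat.factorial m : ℝ) : ℝ) : ℂ) • v m‖
        = |t|^m / (m.factorial : ℝ) * ‖v m‖ := by
    intro t m
    rw [norm_smul, Complex.norm_real, Real.norm_eq_abs, abs_div, abs_pow, Nat.abs_cast]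
  -- Part 1
  have part1 : ∀ t : ℝ, |t| < δ →
      Summable (fun m : ℕ => ((t ^ m / (Nat.factorial m : ℝ) : ℝ) : ℂ) • v m) := by
    intro t ht
    apply Summable.of_norm
    simpa only [norm_term] using key t ht.le
  -- The formal power series
  set p : FormalMultilinearSeries ℝ ℝ H :=
    fun n => ContinuousMultilinearMap.mkPiRing ℝ (Fin n) (((n.factorial : ℝ))⁻¹ • v n)
    with hpdef
  have happly : ∀ (n : ℕ) (y : ℝ),
      (p n fun _ => y) = ((y ^ n / (Nat.factorial n : ℝ) : ℝ) : ℂ) • v n := by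
    intro n y
    rw [hpdef]
    rw [ContinuousMultilinearMap.mkPiRing_apply, Complex.coe_smul,
      Finset.prod_const, Finset.card_univ, Fintype.card_fin, smul_smul, div_eq_mul_inv]
  have hpnorm : ∀ n : ℕ, ‖p n‖ = ((n.factorial : ℝ))⁻¹ * ‖v n‖ := by
    intro n
    rw [hpdef]
    rw [ContinuousMultilinearMap.norm_mkPiRing, norm_smul, Real.norm_eq_abs, abs_inv,
      Nat.abs_cast]
  have hradius : ENNReal.ofReal δ ≤ p.radius := by
    have heq : ∀ n : ℕ, ‖p n‖ * ((δ.toNNReal : ℝ))^n = |δ|^n / (n.factorial:ℝ) * ‖v n‖ := by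
      intro n
      rw [hpnorm, Real.coe_toNNReal _ hδ0.le, abs_of_pos hδ0]; ring
    have hsum : Summable (fun n : ℕ => ‖p n‖ * ((δ.toNNReal : ℝ))^n) := by
      simpa only [heq] using key δ (le_of_eq (abs_of_pos hδ0))
    exact p.le_radius_of_summable hsum
  have hF : HasFPowerSeriesOnBall F p 0 (ENNReal.ofReal δ) := by
    refine ⟨hradius, by simp [ENNReal.ofReal_pos, hδ0], ?_⟩
    intro y hy
    rw [mem_emetric_ball_zero_iff, ← ofReal_norm,
      ENNReal.ofReal_lt_ofReal_iff hδ0, Real.norm_eq_abs] at hy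
    have hs := part1 y hy
    rw [zero_add]
    simpa only [happly] using hs.hasSum
  -- Part 2
  have h0mem : (0:ℝ) ∈ Set.Ioo (-δ) δ := ⟨by linarith, hδ0⟩
  have part2 : ∀ n : ℕ, iteratedDerivWithin n F (Set.Ioo (-δ) δ) 0 = v n := by
    intro n
    rw [iteratedDerivWithin_eq_iteratedFDerivWithin,
      iteratedFDerivWithin_of_isOpen n isOpen_Ioo h0mem]
    have hfs := hF.factorial_smul (1:ℝ) n
    rw [happly] at hfs
    rw [← hfs, one_pow]
    have : ((1 / (Nat.factorial n : ℝ) : ℝ) : ℂ) • v n = (1 / (Nat.factorial n : ℝ)) • v n :=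
      Complex.coe_smul _ _
    rw [this, ← Nat.cast_smul_eq_nsmul ℝ, smul_smul, mul_one_div,
      div_self (by positivity : ((n.factorial : ℝ)) ≠ 0), one_smul]
  -- Part 3
  have part3 : ∀ n : ℕ, v n ∈ closure (Submodule.span ℂ
      {x : H | ∃ t : ℝ, |t| < δ ∧ x = F t} : Set H) := by
    intro n
    set K : Submodule ℂ H := Submodule.span ℂ {x : H | ∃ t : ℝ, |t| < δ ∧ x = F t} with hKdef
    rw [← Submodule.topologicalClosure_coe, ← Submodule.orthogonal_orthogonal_eq_closure,
      SetLike.mem_coe, Submodule.mem_orthogonal]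
    intro u hu
    have hFK : ∀ t ∈ Set.Ioo (-δ) δ, (inner ℂ u (F t) : ℂ) = 0 := by
      intro t ht
      have hmem : F t ∈ K := Submodule.subset_span ⟨t, abs_lt.mpr ⟨ht.1, ht.2⟩, rfl⟩
      exact Submodule.inner_left_of_mem_orthogonal hmem hu
    set φ : H →L[ℝ] ℂ := (innerSL ℂ u).restrictScalars ℝ with hφdef
    have hφ : ∀ x : H, φ x = (inner ℂ u x : ℂ) := fun x => rfl
    have hcomp := φ.comp_hasFPowerSeriesOnBall hF
    have hzero : iteratedFDeriv ℝ n (⇑φ ∘ F) 0 = 0 := by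
      have hev : (⇑φ ∘ F) =ᶠ[nhdsWithin (0:ℝ) Set.univ] (fun _ => (0:ℂ)) := by
        rw [nhdsWithin_univ]
        filter_upwards [isOpen_Ioo.mem_nhds h0mem] with t ht
        simpa [hφ] using hFK t ht
      have h00 : (⇑φ ∘ F) 0 = (fun _ => (0:ℂ)) 0 := by simpa [hφ] using hFK 0 h0mem
      calc iteratedFDeriv ℝ n (⇑φ ∘ F) 0
          = iteratedFDerivWithin ℝ n (⇑φ ∘ F) Set.univ 0 := by rw [iteratedFDerivWithin_univ]
        _ = iteratedFDerivWithin ℝ n (fun _ => (0:ℂ)) Set.univ 0 :=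
            hev.iteratedFDerivWithin_eq h00 n
        _ = iteratedFDeriv ℝ n (fun _ => (0:ℂ)) 0 := by rw [iteratedFDerivWithin_univ]
        _ = 0 := by rw [iteratedFDeriv_zero_fun]; rfl
    have hfs := hcomp.factorial_smul (1:ℝ) n
    rw [hzero] at hfs
    rw [ContinuousLinearMap.compFormalMultilinearSeries_apply] at hfs
    rw [ContinuousLinearMap.compContinuousMultilinearMap_coe] at hfs
    simp only [Function.comp_apply, happly, one_pow, ContinuousMultilinearMap.zero_apply] at hfs
    rw [hφ] at hfs
    rw [inner_smul_right] at hfs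
    have hfac : ((n.factorial : ℂ)) ≠ 0 := Nat.cast_ne_zero.mpr n.factorial_ne_zero
    have hcoef : ((1 / (Nat.factorial n : ℝ) : ℝ) : ℂ) ≠ 0 := by
      rw [Complex.ofReal_ne_zero]
      positivity
    have := hfs
    rw [nsmul_eq_mul] at this
    rcases mul_eq_zero.mp this with h | h
    · exact absurd h (by exact_mod_cast hfac)
    · rcases mul_eq_zero.mp h with h' | h'
      · exact absurd h' hcoef
      · exact h'
  exact ⟨part1, part2, part3⟩
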